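/- Let F₃ be the field with 3 elements and let v₁,…,v₆, u₁,…,u₆ ∈ F₃^* satisfy: Σv_i = 0, Σu_i = 0, Σ_{k=2}^6 y_k u_k = 0, and Σ_{k=2}^6 y_k² u_k = 0, where y_k = v₁+⋯+v_{k−1}. Then (u₁,v₁,…,u₆,v₆) has one of the following five forms for some a,b,c,r ∈ F₃^*: (a,r,b,−r,a,r,b,−r,a,r,b,−r); (a,r,b,−r,−a,−r,c,−r,−b,r,−c,r); (a,r,b,r,c,−r,−b,−r,−a,−r,−c,r); (a,r,b,r,c,r,−a,−r,−c,−r,−b,−r); or (a,r,b,r,c,r,−a,r,−b,r,−c,r). -/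
import Mathlib

def tcf (b : Bool) : ZMod 3 := if b then 1 else 2

set_option maxRecDepth 10000 in
set_option maxHeartbeats 2000000 in
set_option synthInstance.maxHeartbeats 1000000 in
set_option synthInstance.maxSize 2000 in
theorem auxB12 : ∀ b1 b2 b3 b4 b5 b6 c1 c2 c3 c4 c5 c6 : Bool,
    (tcf c1 + tcf c2 + tcf c3 + tcf c4 + tcf c5 + tcf c6 = 0) →
    (tcf b1 + tcf b2 + tcf b3 + tcf b4 + tcf b5 + tcf b6 = 0) →
    (tcf c1 * tcf b2 + (tcf c1 + tcf c2) * tcf b3 + (tcf c1 + tcf c2 + tcf c3) * tcf b4 + (tcf c1 + tcf c2 + tcf c3 + tcf c4) * tcf b5 + (tcf c1 + tcf c2 + tcf c3 + tcf c4 + tcf c5) * tcf b6 = 0) →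
    (tcf c1^2 * tcf b2 + (tcf c1 + tcf c2)^2 * tcf b3 + (tcf c1 + tcf c2 + tcf c3)^2 * tcf b4 + (tcf c1 + tcf c2 + tcf c3 + tcf c4)^2 * tcf b5 + (tcf c1 + tcf c2 + tcf c3 + tcf c4 + tcf c5)^2 * tcf b6 = 0) →
    ((tcf c2 = -tcf c1 ∧ tcf c3 = tcf c1 ∧ tcf c4 = -tcf c1 ∧ tcf c5 = tcf c1 ∧ tcf c6 = -tcf c1 ∧ tcf b3 = tcf b1 ∧ tcf b4 = tcf b2 ∧ tcf b5 = tcf b1 ∧ tcf b6 = tcf b2) ∨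
     (tcf c2 = -tcf c1 ∧ tcf c3 = -tcf c1 ∧ tcf c4 = -tcf c1 ∧ tcf c5 = tcf c1 ∧ tcf c6 = tcf c1 ∧ tcf b3 = -tcf b1 ∧ tcf b5 = -tcf b2 ∧ tcf b6 = -tcf b4) ∨
     (tcf c2 = tcf c1 ∧ tcf c3 = -tcf c1 ∧ tcf c4 = -tcf c1 ∧ tcf c5 = -tcf c1 ∧ tcf c6 = tcf c1 ∧ tcf b4 = -tcf b2 ∧ tcf b5 = -tcf b1 ∧ tcf b6 = -tcf b3) ∨
     (tcf c2 = tcf c1 ∧ tcf c3 = tcf c1 ∧ tcf c4 = -tcf c1 ∧ tcf c5 = -tcf c1 ∧ tcf c6 = -tcf c1 ∧ tcf b4 = -tcf b1 ∧ tcf b5 = -tcf b3 ∧ tcf b6 = -tcf b2) ∨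
     (tcf c2 = tcf c1 ∧ tcf c3 = tcf c1 ∧ tcf c4 = tcf c1 ∧ tcf c5 = tcf c1 ∧ tcf c6 = tcf c1 ∧ tcf b4 = -tcf b1 ∧ tcf b5 = -tcf b2 ∧ tcf b6 = -tcf b3)) := by
  decide

lemma exists_tcf (x : ZMod 3) (hx : x ≠ 0) : ∃ b, x = tcf b := by
  revert hx; revert x; decide

/-- Lemma 6 (only-if direction): any tuple over `F₃^*` satisfying the 12-cycle
conditions (75)–(78) for `Λ(3,3)` has one of the five listed forms. -/
theorem twelve_cycle_forms (u v y : ℕ → ZMod 3)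
    (hne : ∀ i, 1 ≤ i → i ≤ 6 → u i ≠ 0 ∧ v i ≠ 0)
    (hy : ∀ k, y k = ∑ m ∈ Finset.Icc 1 (k - 1), v m)
    (hv : v 1 + v 2 + v 3 + v 4 + v 5 + v 6 = 0)
    (hu : u 1 + u 2 + u 3 + u 4 + u 5 + u 6 = 0)
    (h1 : ∑ k ∈ Finset.Icc 2 6, y k * u k = 0)
    (h2 : ∑ k ∈ Finset.Icc 2 6, y k ^ 2 * u k = 0) :
    (∃ a b r : ZMod 3, a ≠ 0 ∧ b ≠ 0 ∧ r ≠ 0 ∧ u 1 = a ∧ v 1 = r ∧ u 2 = b ∧ v 2 = -r ∧ u 3 = a ∧ v 3 = r ∧ u 4 = b ∧ v 4 = -r ∧ u 5 = a ∧ v 5 = r ∧ u 6 = b ∧ v 6 = -r) ∨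
      (∃ a b c r : ZMod 3, a ≠ 0 ∧ b ≠ 0 ∧ c ≠ 0 ∧ r ≠ 0 ∧ u 1 = a ∧ v 1 = r ∧ u 2 = b ∧ v 2 = -r ∧ u 3 = -a ∧ v 3 = -r ∧ u 4 = c ∧ v 4 = -r ∧ u 5 = -b ∧ v 5 = r ∧ u 6 = -c ∧ v 6 = r) ∨
      (∃ a b c r : ZMod 3, a ≠ 0 ∧ b ≠ 0 ∧ c ≠ 0 ∧ r ≠ 0 ∧ u 1 = a ∧ v 1 = r ∧ u 2 = b ∧ v 2 = r ∧ u 3 = c ∧ v 3 = -r ∧ u 4 = -b ∧ v 4 = -r ∧ u 5 = -a ∧ v 5 = -r ∧ u 6 = -c ∧ v 6 = r) ∨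
      (∃ a b c r : ZMod 3, a ≠ 0 ∧ b ≠ 0 ∧ c ≠ 0 ∧ r ≠ 0 ∧ u 1 = a ∧ v 1 = r ∧ u 2 = b ∧ v 2 = r ∧ u 3 = c ∧ v 3 = r ∧ u 4 = -a ∧ v 4 = -r ∧ u 5 = -c ∧ v 5 = -r ∧ u 6 = -b ∧ v 6 = -r) ∨
      (∃ a b c r : ZMod 3, a ≠ 0 ∧ b ≠ 0 ∧ c ≠ 0 ∧ r ≠ 0 ∧ u 1 = a ∧ v 1 = r ∧ u 2 = b ∧ v 2 = r ∧ u 3 = c ∧ v 3 = r ∧ u 4 = -a ∧ v 4 = r ∧ u 5 = -b ∧ v 5 = r ∧ u 6 = -c ∧ v 6 = r) := by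
  obtain ⟨n1, m1⟩ := hne 1 (by norm_num) (by norm_num)
  obtain ⟨n2, m2⟩ := hne 2 (by norm_num) (by norm_num)
  obtain ⟨n3, m3⟩ := hne 3 (by norm_num) (by norm_num)
  obtain ⟨n4, m4⟩ := hne 4 (by norm_num) (by norm_num)
  obtain ⟨n5, m5⟩ := hne 5 (by norm_num) (by norm_num)
  obtain ⟨n6, m6⟩ := hne 6 (by norm_num) (by norm_num)
  -- compute the y values
  have y2 : y 2 = v 1 := by
    rw [hy, show (Finset.Icc 1 1 : Finset ℕ) = {1} from rfl, Finset.sum_singleton]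
  have y3 : y 3 = v 1 + v 2 := by
    rw [hy, show (Finset.Icc 1 2 : Finset ℕ) = {1, 2} from rfl,
      Finset.sum_insert (by decide), Finset.sum_singleton]
  have y4 : y 4 = v 1 + v 2 + v 3 := by
    rw [hy, show (Finset.Icc 1 3 : Finset ℕ) = {1, 2, 3} from rfl,
      Finset.sum_insert (by decide), Finset.sum_insert (by decide), Finset.sum_singleton]
    ring
  have y5 : y 5 = v 1 + v 2 + v 3 + v 4 := by
    rw [hy, show (Finset.Icc 1 4 : Finset ℕ) = {1, 2, 3, 4} from rfl,
      Finset.sum_insert (by decide), Finset.sum_insert (by decide),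
      Finset.sum_insert (by decide), Finset.sum_singleton]
    ring
  have y6 : y 6 = v 1 + v 2 + v 3 + v 4 + v 5 := by
    rw [hy, show (Finset.Icc 1 5 : Finset ℕ) = {1, 2, 3, 4, 5} from rfl,
      Finset.sum_insert (by decide), Finset.sum_insert (by decide),
      Finset.sum_insert (by decide), Finset.sum_insert (by decide), Finset.sum_singleton]
    ring
  have e3 : v 1 * u 2 + (v 1 + v 2) * u 3 + (v 1 + v 2 + v 3) * u 4
      + (v 1 + v 2 + v 3 + v 4) * u 5 + (v 1 + v 2 + v 3 + v 4 + v 5) * u 6 = 0 := by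
    rw [show (Finset.Icc 2 6 : Finset ℕ) = {2, 3, 4, 5, 6} from rfl,
      Finset.sum_insert (by decide), Finset.sum_insert (by decide),
      Finset.sum_insert (by decide), Finset.sum_insert (by decide),
      Finset.sum_singleton, y2, y3, y4, y5, y6] at h1
    linear_combination h1
  have e4 : v 1 ^ 2 * u 2 + (v 1 + v 2) ^ 2 * u 3 + (v 1 + v 2 + v 3) ^ 2 * u 4
      + (v 1 + v 2 + v 3 + v 4) ^ 2 * u 5 + (v 1 + v 2 + v 3 + v 4 + v 5) ^ 2 * u 6 = 0 := by
    rw [show (Finset.Icc 2 6 : Finset ℕ) = {2, 3, 4, 5, 6} from rfl,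
      Finset.sum_insert (by decide), Finset.sum_insert (by decide),
      Finset.sum_insert (by decide), Finset.sum_insert (by decide),
      Finset.sum_singleton, y2, y3, y4, y5, y6] at h2
    linear_combination h2
  obtain ⟨b1, hb1⟩ := exists_tcf _ n1
  obtain ⟨b2, hb2⟩ := exists_tcf _ n2
  obtain ⟨b3, hb3⟩ := exists_tcf _ n3
  obtain ⟨b4, hb4⟩ := exists_tcf _ n4
  obtain ⟨b5, hb5⟩ := exists_tcf _ n5
  obtain ⟨b6, hb6⟩ := exists_tcf _ n6
  obtain ⟨c1, hc1⟩ := exists_tcf _ m1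
  obtain ⟨c2, hc2⟩ := exists_tcf _ m2
  obtain ⟨c3, hc3⟩ := exists_tcf _ m3
  obtain ⟨c4, hc4⟩ := exists_tcf _ m4
  obtain ⟨c5, hc5⟩ := exists_tcf _ m5
  obtain ⟨c6, hc6⟩ := exists_tcf _ m6
  have H := auxB12 b1 b2 b3 b4 b5 b6 c1 c2 c3 c4 c5 c6
    (by rw [← hc1, ← hc2, ← hc3, ← hc4, ← hc5, ← hc6]; exact hv)
    (by rw [← hb1, ← hb2, ← hb3, ← hb4, ← hb5, ← hb6]; exact hu)
    (by rw [← hb2, ← hb3, ← hb4, ← hb5, ← hb6, ← hc1, ← hc2, ← hc3, ← hc4, ← hc5]; exact e3)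
    (by rw [← hb2, ← hb3, ← hb4, ← hb5, ← hb6, ← hc1, ← hc2, ← hc3, ← hc4, ← hc5]; exact e4)
  rw [← hb1, ← hb2, ← hb3, ← hb4, ← hb5, ← hb6, ← hc1, ← hc2, ← hc3, ← hc4, ← hc5, ← hc6] at H
  rcases H with ⟨p1, p2, p3, p4, p5, p6, p7, p8, p9⟩ |
    ⟨p1, p2, p3, p4, p5, p6, p7, p8⟩ | ⟨p1, p2, p3, p4, p5, p6, p7, p8⟩ |
    ⟨p1, p2, p3, p4, p5, p6, p7, p8⟩ | ⟨p1, p2, p3, p4, p5, p6, p7, p8⟩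
  · exact Or.inl ⟨u 1, u 2, v 1, n1, n2, m1, rfl, rfl, rfl, p1, p6, p2, p7, p3, p8, p4, p9, p5⟩
  · exact Or.inr (Or.inl ⟨u 1, u 2, u 4, v 1, n1, n2, n4, m1,
      rfl, rfl, rfl, p1, p6, p2, rfl, p3, p7, p4, p8, p5⟩)
  · exact Or.inr (Or.inr (Or.inl ⟨u 1, u 2, u 3, v 1, n1, n2, n3, m1,
      rfl, rfl, rfl, p1, rfl, p2, p6, p3, p7, p4, p8, p5⟩))
  · exact Or.inr (Or.inr (Or.inr (Or.inl ⟨u 1, u 2, u 3, v 1, n1, n2, n3, m1,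
      rfl, rfl, rfl, p1, rfl, p2, p6, p3, p7, p4, p8, p5⟩)))
  · exact Or.inr (Or.inr (Or.inr (Or.inr ⟨u 1, u 2, u 3, v 1, n1, n2, n3, m1,
      rfl, rfl, rfl, p1, rfl, p2, p6, p3, p7, p4, p8, p5⟩)))
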